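/- For every y ∈ [0,2) ∩ ℤ[φ], one has R(y) ∈ ℤ[φ] and R(y) − y ∈ 2ℤ[φ]; that is, R preserves ℤ[φ] ∩ [0,2) and acts on it as the identity modulo 2ℤ[φ]. -/
import Mathlib


open Set

noncomputable section

/-- The golden ratio `(1+√5)/2`. -/
def gold : ℝ := (1 + Real.sqrt 5) / 2

/-- The ring `ℤ[φ]`. -/
def Zgold : Set ℝ := {x | ∃ m n : ℤ, x = m + n * gold}

/-- The set `2ℤ[φ]`. -/
def twoZgold : Set ℝ := {x | ∃ m n : ℤ, x = 2 * m + 2 * n * gold}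

/-- The renormalization map `R` on `[0,2)`. -/
def Rmap (y : ℝ) : ℝ :=
  if y < 2 - gold then gold ^ 3 * y
  else if y < 4 - 2 * gold then y + 2 * gold - 2
  else if y < 2 * gold - 2 then gold ^ 3 * y - 2 * gold
  else if y < gold then y - 2 * gold + 2
  else gold ^ 3 * y - 4 * gold

/-- `R` preserves `ℤ[φ] ∩ [0,2)` and acts on it as the identity modulo `2ℤ[φ]`. -/
theorem Rmap_preserves_Zgold (y : ℝ) (hy : y ∈ Set.Ico (0 : ℝ) 2) (hZ : y ∈ Zgold) :
    Rmap y ∈ Zgold ∧ Rmap y - y ∈ twoZgold := by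
  have hg : gold ^ 2 = gold + 1 := by
    have h5 : Real.sqrt 5 ^ 2 = 5 := Real.sq_sqrt (by norm_num)
    unfold gold; nlinarith [h5]
  obtain ⟨m, n, rfl⟩ := hZ
  unfold Rmap
  split_ifs with h1 h2 h3 h4
  · refine ⟨⟨m + 2*n, 2*m + 3*n, ?_⟩, ⟨n, m + n, ?_⟩⟩
    · push_cast; linear_combination (m*(gold+1) + n*(gold^2+gold+2)) * hg
    · push_cast; linear_combination (m*(gold+1) + n*(gold^2+gold+2)) * hg
  · exact ⟨⟨m - 2, n + 2, by push_cast; ring⟩, ⟨-1, 1, by push_cast; ring⟩⟩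
  · refine ⟨⟨m + 2*n, 2*m + 3*n - 2, ?_⟩, ⟨n, m + n - 1, ?_⟩⟩
    · push_cast; linear_combination (m*(gold+1) + n*(gold^2+gold+2)) * hg
    · push_cast; linear_combination (m*(gold+1) + n*(gold^2+gold+2)) * hg
  · exact ⟨⟨m + 2, n - 2, by push_cast; ring⟩, ⟨1, -1, by push_cast; ring⟩⟩
  · refine ⟨⟨m + 2*n, 2*m + 3*n - 4, ?_⟩, ⟨n, m + n - 2, ?_⟩⟩
    · push_cast; linear_combination (m*(gold+1) + n*(gold^2+gold+2)) * hg
    · push_cast; linear_combination (m*(gold+1) + n*(gold^2+gold+2)) * hg
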